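/- arXiv:2312.07267 — 2 statements merged into one kernel-verified Lean document; each statement's English description precedes it below -/
import Mathlib

section
/- For any partition ν of n, the polynomial identity (X-1)·Σ_{k=0}^{n-1} (-1)^k ξ_{n,k}(ν) X^{n-1-k} = Π_{k=1}^{ℓ(ν)} (X^{ν_k} - 1) holds, where ξ_{n,k} = χ_{(n-k,1,…,1)} is the irreducible character of S_n indexed by the hook partition (n-k,1,…,1) and ξ_{n,k}(ν) denotes its value on any permutation of cycle type ν. -/
namespace SnChar

/-- The `i`-th part (1-indexed) of a partition of `n`, or `0` if out of range. -/
def part {n : ℕ} (ν : n.Partition) (i : ℕ) : ℕ :=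
  ((ν.parts.sort (· ≤ ·)).reverse).getD (i - 1) 0

/-- The `j`-th part (1-indexed) of the conjugate partition: the number of parts `≥ j`. -/
def conj {n : ℕ} (ν : n.Partition) (j : ℕ) : ℕ :=
  (ν.parts.filter (fun p => j ≤ p)).card

/-- Durfee square size: the largest `i ≥ 1` with `λ_i ≥ i` (0 for the empty partition). -/
def durfee {n : ℕ} (ν : n.Partition) : ℕ :=
  (((Finset.Icc 1 n)).filter (fun i => i ≤ part ν i)).sup id

/-- Hook length at the box `(i,j)` (1-indexed): `(λ_i - j) + (λ'_j - i) + 1`. -/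
def hookLen {n : ℕ} (ν : n.Partition) (i j : ℕ) : ℕ :=
  (part ν i - j) + (conj ν j - i) + 1

/-- The set of boxes of the Young diagram, 1-indexed. -/
def isBox {n : ℕ} (ν : n.Partition) (i j : ℕ) : Prop :=
  1 ≤ i ∧ 1 ≤ j ∧ j ≤ part ν i

/-- The hook at box `(i,j)`, as a finite set of boxes. -/
def hookCells {n : ℕ} (ν : n.Partition) (i j : ℕ) : Finset (ℕ × ℕ) :=
  ((Finset.Icc j (part ν i)).image (fun u => (i, u))) ∪
    ((Finset.Icc i (conj ν j)).image (fun v => (v, j)))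

/-- The sum of the contents `v - u` over the boxes `(u,v)` of `λ` with `u,v ≥ k`. -/
def contentSumFrom {n : ℕ} (ν : n.Partition) (k : ℕ) : ℤ :=
  ∑ p ∈ (Finset.Icc 1 n ×ˢ Finset.Icc 1 n).filter
      (fun p => k ≤ p.1 ∧ k ≤ p.2 ∧ p.2 ≤ part ν p.1), ((p.2 : ℤ) - (p.1 : ℤ))

/-- The partition `(1,1,…,1)` of `n`. -/
def onesPart (n : ℕ) : n.Partition :=
  ⟨Multiset.replicate n 1, by
    intro i hi
    have := Multiset.eq_of_mem_replicate hi
    omega, by simp⟩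

/-- The hook partition `(n-k,1,…,1)` of `n` (junk value `(1,…,1)` if `k ≥ n`). -/
def hookPart (n k : ℕ) : n.Partition :=
  if h : k < n then
    ⟨(n - k) ::ₘ Multiset.replicate k 1, by
      intro i hi
      rcases Multiset.mem_cons.mp hi with h1 | h1
      · omega
      · have := Multiset.eq_of_mem_replicate h1; omega, by
      simp [Multiset.sum_cons, Multiset.sum_replicate]; omega⟩
  else onesPart n

/-- The value `χ_λ(μ)` of the irreducible character of `S_n` indexed by the partition `λ`
on the conjugacy class of cycle type `μ`, defined by Frobenius's formula: it is the
coefficient of `x^(λ+δ)` in `(∏_{i<j} (x_i - x_j)) · p_μ`, where `δ = (n-1,…,1,0)`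
and `p_μ` is the product of the power sums of the parts of `μ`. -/
noncomputable def charValue {n : ℕ} (lam mu : n.Partition) : ℤ :=
  MvPolynomial.coeff
    (Finsupp.equivFunOnFinite.symm fun i : Fin n => part lam ((i : ℕ) + 1) + (n - 1 - (i : ℕ)))
    ((∏ p ∈ Finset.univ.filter (fun p : Fin n × Fin n => p.1 < p.2),
        (MvPolynomial.X p.1 - MvPolynomial.X p.2)) *
      (mu.parts.map fun m => ∑ i : Fin n, (MvPolynomial.X i : MvPolynomial (Fin n) ℤ) ^ m).prod)

/-- The cycle type of a permutation of `Fin n`, as a partition of `n`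
(cycle lengths together with a part `1` for each fixed point). -/
def permPartition {n : ℕ} (g : Equiv.Perm (Fin n)) : n.Partition :=
  (Fintype.card_fin n) ▸ g.partition

end SnChar


namespace SnCharAux
open MvPolynomial Equiv Equiv.Perm Finset Matrix Fin.NatCast

variable (n : ℕ)

noncomputable def Vp : MvPolynomial (Fin n) ℤ :=
  ∏ p ∈ Finset.univ.filter (fun p : Fin n × Fin n => p.1 < p.2),
    (MvPolynomial.X p.1 - MvPolynomial.X p.2)

noncomputable def Pp (s : Multiset ℕ) : MvPolynomial (Fin n) ℤ :=
  (s.map fun m => ∑ i : Fin n, (MvPolynomial.X i : MvPolynomial (Fin n) ℤ) ^ m).prod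

lemma prod_pairs {M : Type*} [CommMonoid M] (f : Fin n → Fin n → M) :
    ∏ p ∈ Finset.univ.filter (fun p : Fin n × Fin n => p.1 < p.2), f p.1 p.2
      = ∏ i : Fin n, ∏ j ∈ Finset.Ioi i, f i j := by
  rw [Finset.prod_sigma']
  refine (Finset.prod_nbij' (fun (p : (_ : Fin n) × Fin n) => (p.1, p.2))
    (fun (p : Fin n × Fin n) => ⟨p.1, p.2⟩) ?_ ?_ ?_ ?_ ?_).symm <;>
    simp +contextual [Finset.mem_sigma, Finset.mem_filter]

lemma Vp_eq_det :
    Vp n = (Matrix.vandermonde fun i : Fin n => (MvPolynomial.X i.rev : MvPolynomial (Fin n) ℤ)).det := by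
  rw [Matrix.det_vandermonde, ← prod_pairs, Vp]
  refine Finset.prod_nbij' (fun p => (p.2.rev, p.1.rev)) (fun p => (p.2.rev, p.1.rev)) ?_ ?_ ?_ ?_ ?_ <;>
    simp +contextual [Finset.mem_filter, Fin.rev_lt_rev]

lemma map_vandermonde {R S : Type*} [CommRing R] [CommRing S] (f : R →+* S) (v : Fin n → R) :
    (Matrix.vandermonde v).map f = Matrix.vandermonde (fun i => f (v i)) := by
  ext i j; simp [Matrix.vandermonde]

lemma rename_Vp (σ : Perm (Fin n)) :
    rename σ (Vp n) = (Equiv.Perm.sign σ : ℤ) • Vp n := by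
  have hτ : ∀ τ : Perm (Fin n),
      (Matrix.vandermonde fun i : Fin n => (MvPolynomial.X ((Fin.revPerm : Perm (Fin n)) (τ i)) : MvPolynomial (Fin n) ℤ))
        = (Matrix.vandermonde fun i : Fin n => (MvPolynomial.X i.rev : MvPolynomial (Fin n) ℤ)).submatrix τ id := by
    intro τ; ext i j; simp [Matrix.vandermonde]
  set τ : Perm (Fin n) := Fin.revPerm * σ * Fin.revPerm with hτdef
  set f : MvPolynomial (Fin n) ℤ →+* MvPolynomial (Fin n) ℤ :=
    (rename (σ : Fin n → Fin n) : MvPolynomial (Fin n) ℤ →ₐ[ℤ] MvPolynomial (Fin n) ℤ).toRingHom with hf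
  have key : f (Vp n) = (Equiv.Perm.sign τ : ℤ) * Vp n := by
    rw [Vp_eq_det, RingHom.map_det, RingHom.mapMatrix_apply, map_vandermonde]
    have : (fun i : Fin n => f (MvPolynomial.X i.rev))
        = fun i : Fin n => (MvPolynomial.X ((Fin.revPerm : Perm (Fin n)) (τ i)) : MvPolynomial (Fin n) ℤ) := by
      funext i
      simp [hf, hτdef, Equiv.Perm.mul_apply, rename_X]
    rw [this, hτ, Matrix.det_permute]
  have hsign : Equiv.Perm.sign τ = Equiv.Perm.sign σ := by
    simp only [hτdef, _root_.map_mul]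
    rw [mul_comm (Equiv.Perm.sign (Fin.revPerm : Perm (Fin n))) (Equiv.Perm.sign σ), mul_assoc,
      Int.units_mul_self, mul_one]
  rw [← hsign]
  simpa [hf, zsmul_eq_mul] using key

lemma rename_Pp (σ : Perm (Fin n)) (s : Multiset ℕ) :
    rename σ (Pp n s) = Pp n s := by
  rw [Pp, map_multiset_prod, Multiset.map_map]
  congr 1
  apply Multiset.map_congr rfl
  intro m _
  simp only [Function.comp_apply, map_sum, map_pow, rename_X]
  exact Equiv.sum_comp σ (fun i => (MvPolynomial.X i : MvPolynomial (Fin n) ℤ) ^ m)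

lemma coeff_comp_perm (s : Multiset ℕ) (σ : Perm (Fin n)) (E : Fin n → ℕ) :
    MvPolynomial.coeff (Finsupp.equivFunOnFinite.symm (fun j => E (σ j))) (Vp n * Pp n s)
      = (Equiv.Perm.sign σ : ℤ) * MvPolynomial.coeff (Finsupp.equivFunOnFinite.symm E) (Vp n * Pp n s) := by
  have hmd : Finsupp.mapDomain (σ : Fin n → Fin n) (Finsupp.equivFunOnFinite.symm (fun j => E (σ j)))
      = Finsupp.equivFunOnFinite.symm E := by
    ext j
    rw [Finsupp.mapDomain_equiv_apply]
    simp
  have := MvPolynomial.coeff_rename_mapDomain (σ : Fin n → Fin n) σ.injective (Vp n * Pp n s)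
    (Finsupp.equivFunOnFinite.symm (fun j => E (σ j)))
  rw [hmd] at this
  rw [← this, _root_.map_mul, rename_Vp, rename_Pp, smul_mul_assoc, MvPolynomial.coeff_smul,
    zsmul_eq_mul]
  norm_cast

lemma coeff_zero_of_repeat (s : Multiset ℕ) (E : Fin n → ℕ) (a b : Fin n) (hab : a ≠ b)
    (h : E a = E b) :
    MvPolynomial.coeff (Finsupp.equivFunOnFinite.symm E) (Vp n * Pp n s) = 0 := by
  have hE : (fun j => E (Equiv.swap a b j)) = E := by
    funext j
    rcases eq_or_ne j a with rfl | hja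
    · rw [Equiv.swap_apply_left, h]
    rcases eq_or_ne j b with rfl | hjb
    · rw [Equiv.swap_apply_right, h]
    · rw [Equiv.swap_apply_of_ne_of_ne hja hjb]
  have := coeff_comp_perm n s (Equiv.swap a b) E
  rw [hE, Equiv.Perm.sign_swap hab] at this
  simp at this
  omega


lemma prod_monomial_one {ι : Type*} (s : Finset ι) (d : ι → (Fin n →₀ ℕ)) :
    (∏ i ∈ s, (MvPolynomial.monomial (d i) (1 : ℤ))) = MvPolynomial.monomial (∑ i ∈ s, d i) 1 := by
  classical
  induction s using Finset.cons_induction with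
  | empty => simp
  | cons a s ha ih => rw [Finset.prod_cons, ih, Finset.sum_cons, MvPolynomial.monomial_mul, one_mul]

lemma prod_X_pow_perm (g : Equiv.Perm (Fin n)) (e : Fin n → ℕ) :
    (∏ i : Fin n, (MvPolynomial.X (g i) : MvPolynomial (Fin n) ℤ) ^ e i)
      = MvPolynomial.monomial (Finsupp.equivFunOnFinite.symm fun j => e (g.symm j)) 1 := by
  simp only [MvPolynomial.X_pow_eq_monomial]
  rw [prod_monomial_one]
  have h2 : (∑ i : Fin n, Finsupp.single (g i) (e i))
      = Finsupp.equivFunOnFinite.symm fun j => e (g.symm j) := by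
    ext j
    rw [Finsupp.finset_sum_apply]
    have h1 : ∀ i : Fin n, (Finsupp.single (g i) (e i)) j = if i = g.symm j then e i else 0 := by
      intro i
      rw [Finsupp.single_apply]
      congr 1
      simp [Equiv.apply_eq_iff_eq_symm_apply]
    rw [Finset.sum_congr rfl (fun i _ => h1 i), Finset.sum_ite_eq' Finset.univ (g.symm j) e]
    simp
  rw [h2]

lemma coeff_delta :
    MvPolynomial.coeff (Finsupp.equivFunOnFinite.symm fun j : Fin n => n - 1 - (j : ℕ)) (Vp n) = 1 := by
  rw [Vp_eq_det, Matrix.det_apply, MvPolynomial.coeff_sum]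
  have hterm : ∀ σ : Equiv.Perm (Fin n),
      MvPolynomial.coeff (Finsupp.equivFunOnFinite.symm fun j : Fin n => n - 1 - (j : ℕ))
        (Equiv.Perm.sign σ • ∏ i : Fin n,
          Matrix.vandermonde (fun i : Fin n => (MvPolynomial.X i.rev : MvPolynomial (Fin n) ℤ)) (σ i) i)
      = (Equiv.Perm.sign σ : ℤ) *
        (if (Finsupp.equivFunOnFinite.symm fun j : Fin n => (((σ.trans Fin.revPerm).symm j : Fin n) : ℕ))
            = (Finsupp.equivFunOnFinite.symm fun j : Fin n => n - 1 - (j : ℕ)) then 1 else 0) := by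
    intro σ
    have : (∏ i : Fin n,
        Matrix.vandermonde (fun i : Fin n => (MvPolynomial.X i.rev : MvPolynomial (Fin n) ℤ)) (σ i) i)
        = ∏ i : Fin n, (MvPolynomial.X ((σ.trans Fin.revPerm) i) : MvPolynomial (Fin n) ℤ) ^ ((fun i : Fin n => (i : ℕ)) i) := by
      apply Finset.prod_congr rfl
      intro i _
      simp [Matrix.vandermonde]
    rw [this, prod_X_pow_perm, MvPolynomial.coeff_smul, MvPolynomial.coeff_monomial]
    norm_cast
  rw [Finset.sum_congr rfl (fun σ _ => hterm σ)]
  rw [Finset.sum_eq_single_of_mem (1 : Equiv.Perm (Fin n)) (Finset.mem_univ _)]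
  · have : (Finsupp.equivFunOnFinite.symm fun j : Fin n => ((((1 : Equiv.Perm (Fin n)).trans Fin.revPerm).symm j : Fin n) : ℕ))
        = (Finsupp.equivFunOnFinite.symm fun j : Fin n => n - 1 - (j : ℕ)) := by
      congr 1
      funext j
      simp [Fin.revPerm, Fin.val_rev, Equiv.Perm.one_symm]
      omega
    rw [this]
    simp
  · intro σ _ hσ
    rw [if_neg, mul_zero]
    intro hEq
    apply hσ
    have hfun := congrArg (fun d => Finsupp.equivFunOnFinite d) hEq
    simp only [Equiv.apply_symm_apply] at hfun
    have : ∀ j : Fin n, ((σ.trans Fin.revPerm).symm j) = Fin.rev j := by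
      intro j
      have h1 : (((σ.trans Fin.revPerm).symm j : Fin n) : ℕ) = n - 1 - (j : ℕ) := congrFun hfun j
      apply Fin.ext
      rw [h1, Fin.val_rev]
      omega
    ext x
    have hx := this (Fin.rev x)
    rw [Fin.rev_rev] at hx
    have h2 : Fin.rev x = (σ.trans Fin.revPerm) x := by
      have := congrArg (σ.trans Fin.revPerm) hx
      rwa [Equiv.apply_symm_apply] at this
    simp only [Equiv.trans_apply, Fin.revPerm_apply] at h2
    exact congrArg Fin.val (Fin.rev_injective h2.symm : σ x = x)

def Ef (r k : ℕ) : Fin n → ℕ := fun i =>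
  if (i : ℕ) = 0 then r + (n - 1 - k) else if (i : ℕ) ≤ k then n - (i : ℕ) else n - 1 - (i : ℕ)

noncomputable def Bc (k : ℕ) (s : Multiset ℕ) : ℤ :=
  MvPolynomial.coeff (Finsupp.equivFunOnFinite.symm (Ef n s.sum k)) (Vp n * Pp n s)

def cyc [NeZero n] : ℕ → ℕ → Equiv.Perm (Fin n)
  | _, 0 => 1
  | a, d+1 => (cyc (a+1) d) * Equiv.swap ((a : ℕ) : Fin n) (((a+1 : ℕ) : ℕ) : Fin n)

lemma sign_cyc [NeZero n] (a d : ℕ) (h : a + d < n) :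
    Equiv.Perm.sign (cyc n a d) = (-1) ^ d := by
  induction d generalizing a with
  | zero => simp [cyc]
  | succ d ih =>
    have ha : ((a : Fin n) : ℕ) = a := Fin.val_cast_of_lt (by omega)
    have ha' : (((a+1 : ℕ) : Fin n) : ℕ) = a + 1 := Fin.val_cast_of_lt (by omega)
    have hne : ((a : ℕ) : Fin n) ≠ (((a+1 : ℕ) : ℕ) : Fin n) := by
      intro hEq
      have := congrArg Fin.val hEq
      omega
    rw [cyc, _root_.map_mul, ih (a+1) (by omega), Equiv.Perm.sign_swap hne, pow_succ]

lemma cyc_val [NeZero n] (a d : ℕ) (h : a + d < n) (x : Fin n) :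
    ((cyc n a d x : Fin n) : ℕ)
      = if (x : ℕ) = a then a + d
        else if a < (x : ℕ) ∧ (x : ℕ) ≤ a + d then (x : ℕ) - 1 else (x : ℕ) := by
  induction d generalizing a x with
  | zero =>
    simp only [cyc, Equiv.Perm.one_apply]
    split_ifs <;> omega
  | succ d ih =>
    have ha : ((a : Fin n) : ℕ) = a := Fin.val_cast_of_lt (by omega)
    have ha' : (((a+1 : ℕ) : Fin n) : ℕ) = a + 1 := Fin.val_cast_of_lt (by omega)
    rw [cyc]
    rcases eq_or_ne x ((a : ℕ) : Fin n) with rfl | hxa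
    · rw [Equiv.Perm.mul_apply, Equiv.swap_apply_left, ih (a+1) (by omega)]
      rw [ha, ha']
      split_ifs <;> omega
    rcases eq_or_ne x (((a+1 : ℕ) : ℕ) : Fin n) with rfl | hxa'
    · rw [Equiv.Perm.mul_apply, Equiv.swap_apply_right, ih (a+1) (by omega)]
      rw [ha, ha']
      have : ¬ ((a:ℕ) = a + 1) := by omega
      split_ifs <;> omega
    · rw [Equiv.Perm.mul_apply, Equiv.swap_apply_of_ne_of_ne hxa hxa', ih (a+1) (by omega)]
      have hxa2 : (x : ℕ) ≠ a := fun hc => hxa (by apply Fin.ext; rw [ha]; exact hc)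
      have hxa2' : (x : ℕ) ≠ a + 1 := fun hc => hxa' (by apply Fin.ext; rw [ha']; exact hc)
      split_ifs <;> omega

lemma Pp_zero : Pp n 0 = 1 := by simp [Pp]

lemma B_empty (k : ℕ) (hk : k < n) : Bc n k 0 = (-1) ^ k := by
  haveI : NeZero n := ⟨by omega⟩
  have hEf : Ef n 0 k = fun j : Fin n => (n - 1 - ((cyc n 0 k j : Fin n) : ℕ)) := by
    funext j
    rw [cyc_val n 0 k (by omega) j, Ef]
    split_ifs <;> omega
  have := coeff_comp_perm n 0 (cyc n 0 k) (fun j : Fin n => n - 1 - (j : ℕ))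
  rw [Bc, Multiset.sum_zero, hEf]
  rw [show (fun j : Fin n => n - 1 - ((cyc n 0 k j : Fin n) : ℕ))
      = (fun j : Fin n => (fun i : Fin n => n - 1 - (i : ℕ)) ((cyc n 0 k) j)) from rfl]
  rw [this, sign_cyc n 0 k (by omega)]
  rw [Pp_zero, mul_one, coeff_delta]
  push_cast
  ring

lemma B_vanish (k : ℕ) (s : Multiset ℕ) (hk : k < n) (h1 : 1 ≤ s.sum) (h2 : s.sum ≤ k) :
    Bc n k s = 0 := by
  refine coeff_zero_of_repeat n s _ ⟨0, by omega⟩ ⟨k - s.sum + 1, by omega⟩ ?_ ?_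
  · intro hEq
    have := congrArg Fin.val hEq
    simp at this
  · show Ef n s.sum k ⟨0, _⟩ = Ef n s.sum k ⟨k - s.sum + 1, _⟩
    simp only [Ef]
    split_ifs <;> omega

lemma B_cons (k m : ℕ) (hk : k < n) (hm : 1 ≤ m) (s : Multiset ℕ) :
    Bc n k (m ::ₘ s) = Bc n k s + (if m ≤ k then (-1) ^ (m-1) * Bc n (k-m) s else 0) := by
  haveI : NeZero n := ⟨by omega⟩
  have hprod : Vp n * Pp n (m ::ₘ s)
      = ∑ i : Fin n, (Vp n * Pp n s) * (MvPolynomial.X i) ^ m := by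
    rw [Pp, Multiset.map_cons, Multiset.prod_cons, ← Pp, Finset.sum_mul, Finset.mul_sum]
    exact Finset.sum_congr rfl fun i _ => by ring
  have hBdef : Bc n k (m ::ₘ s)
      = ∑ i : Fin n, MvPolynomial.coeff (Finsupp.equivFunOnFinite.symm (Ef n (m + s.sum) k))
          ((Vp n * Pp n s) * (MvPolynomial.X i) ^ m) := by
    rw [Bc, Multiset.sum_cons, hprod, MvPolynomial.coeff_sum]
  rw [hBdef]
  have hterm : ∀ i : Fin n,
      MvPolynomial.coeff (Finsupp.equivFunOnFinite.symm (Ef n (m + s.sum) k))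
          ((Vp n * Pp n s) * (MvPolynomial.X i) ^ m)
        = (if (i : ℕ) = 0 then Bc n k s
           else if (i : ℕ) + m = k + 1 then (-1) ^ (m-1) * Bc n (k-m) s else 0) := by
    intro i
    rw [MvPolynomial.X_pow_eq_monomial, MvPolynomial.coeff_mul_monomial']
    have hEapp : ∀ j : Fin n,
        (Finsupp.equivFunOnFinite.symm (Ef n (m + s.sum) k)) j = Ef n (m + s.sum) k j := fun j => rfl
    have hle : (Finsupp.single i m ≤ Finsupp.equivFunOnFinite.symm (Ef n (m + s.sum) k))
        ↔ m ≤ Ef n (m + s.sum) k i := by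
      rw [Finsupp.single_le_iff, hEapp]
    set v : Fin n → ℕ := fun j => if (j : ℕ) = (i : ℕ) then Ef n (m + s.sum) k j - m
      else Ef n (m + s.sum) k j with hv
    have hsub : Finsupp.equivFunOnFinite.symm (Ef n (m + s.sum) k) - Finsupp.single i m
        = Finsupp.equivFunOnFinite.symm v := by
      ext j
      rw [Finsupp.tsub_apply, hEapp]
      have : (Finsupp.equivFunOnFinite.symm v) j = v j := rfl
      rw [this, Finsupp.single_apply]
      simp only [hv, Fin.ext_iff]
      split_ifs <;> omega
    by_cases h0 : (i : ℕ) = 0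
    · rw [if_pos h0]
      have hcond : m ≤ Ef n (m + s.sum) k i := by
        simp only [Ef]; rw [if_pos h0]; omega
      rw [if_pos (hle.mpr hcond), hsub]
      have hveq : v = Ef n s.sum k := by
        funext j
        simp only [hv, Ef]
        split_ifs <;> omega
      rw [hveq, mul_one, Bc]
    · rw [if_neg h0]
      by_cases hIk : (i : ℕ) ≤ k
      · -- 1 ≤ i ≤ k, E i = n - i
        have hEi : Ef n (m + s.sum) k i = n - (i : ℕ) := by
          simp only [Ef]; rw [if_neg h0, if_pos hIk]
        by_cases hmle : m ≤ n - (i : ℕ)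
        · rw [if_pos (hle.mpr (by rw [hEi]; exact hmle)), hsub, mul_one]
          by_cases hhit : (i : ℕ) + m = k + 1
          · rw [if_pos hhit]
            set σ := cyc n (i : ℕ) (m - 1) with hσ
            have hbound : (i : ℕ) + (m - 1) < n := by omega
            have hveq : v = fun j : Fin n => Ef n s.sum (k - m) (σ j) := by
              funext j
              have hval := cyc_val n (i : ℕ) (m - 1) hbound j
              have hjlt : (j : ℕ) < n := j.isLt
              simp only [hv, Ef]
              rw [hval]
              split_ifs <;> omega
            rw [hveq]
            have := coeff_comp_perm n s σ (Ef n s.sum (k - m))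
            rw [this, hσ, sign_cyc n (i : ℕ) (m-1) hbound, Bc]
            push_cast
            ring
          · rw [if_neg hhit]
            by_cases hin : (i : ℕ) + m ≤ k
            · apply coeff_zero_of_repeat n s v i ⟨(i : ℕ) + m, by omega⟩
              · intro hc; have := congrArg Fin.val hc; simp at this; omega
              · show v i = v ⟨(i : ℕ) + m, _⟩
                simp only [hv, Ef]
                split_ifs <;> omega
            · -- i + m ≥ k + 2
              apply coeff_zero_of_repeat n s v i ⟨(i : ℕ) + m - 1, by omega⟩
              · intro hc; have := congrArg Fin.val hc; simp at this; omega
              · show v i = v ⟨(i : ℕ) + m - 1, _⟩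
                simp only [hv, Ef]
                split_ifs <;> omega
        · rw [if_neg, if_neg (by omega)]
          rw [hle, hEi]
          omega
      · -- i > k, E i = n - 1 - i
        have hEi : Ef n (m + s.sum) k i = n - 1 - (i : ℕ) := by
          simp only [Ef]; rw [if_neg h0, if_neg hIk]
        rw [if_neg (by omega : ¬ ((i : ℕ) + m = k + 1))]
        by_cases hmle : m ≤ n - 1 - (i : ℕ)
        · rw [if_pos (hle.mpr (by rw [hEi]; exact hmle)), hsub, mul_one]
          apply coeff_zero_of_repeat n s v i ⟨(i : ℕ) + m, by omega⟩
          · intro hc; have := congrArg Fin.val hc; simp at this; omega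
          · show v i = v ⟨(i : ℕ) + m, _⟩
            simp only [hv, Ef]
            split_ifs <;> omega
        · rw [if_neg]
          rw [hle, hEi]
          omega
  rw [Finset.sum_congr rfl (fun i _ => hterm i)]
  by_cases hmk : m ≤ k
  · have h1iff : ∀ i : Fin n, (i = (⟨k + 1 - m, by omega⟩ : Fin n)) ↔ ((i : ℕ) + m = k + 1) := by
      intro i
      rw [Fin.ext_iff]
      constructor <;> intro <;> simp_all <;> omega
    have hsplit : ∀ i : Fin n,
        (if (i : ℕ) = 0 then Bc n k s
         else if (i : ℕ) + m = k + 1 then (-1) ^ (m-1) * Bc n (k-m) s else 0)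
        = (if i = (⟨0, by omega⟩ : Fin n) then Bc n k s else 0)
          + (if i = (⟨k + 1 - m, by omega⟩ : Fin n) then (-1) ^ (m-1) * Bc n (k-m) s else 0) := by
      intro i
      have h0iff : (i = (⟨0, by omega⟩ : Fin n)) ↔ ((i : ℕ) = 0) := by
        rw [Fin.ext_iff]
      by_cases hA : (i : ℕ) = 0
      · rw [if_pos hA, if_pos (h0iff.mpr hA), if_neg, add_zero]
        intro hc
        have := (h1iff i).mp hc
        omega
      · rw [if_neg hA, if_neg (fun hc => hA (h0iff.mp hc)), zero_add]
        by_cases hB : (i : ℕ) + m = k + 1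
        · rw [if_pos hB, if_pos ((h1iff i).mpr hB)]
        · rw [if_neg hB, if_neg (fun hc => hB ((h1iff i).mp hc))]
    rw [Finset.sum_congr rfl (fun i _ => hsplit i), Finset.sum_add_distrib,
      Finset.sum_ite_eq' Finset.univ, Finset.sum_ite_eq' Finset.univ,
      if_pos (Finset.mem_univ _), if_pos (Finset.mem_univ _), if_pos hmk]
  · have hsplit : ∀ i : Fin n,
        (if (i : ℕ) = 0 then Bc n k s
         else if (i : ℕ) + m = k + 1 then (-1) ^ (m-1) * Bc n (k-m) s else 0)
        = (if i = (⟨0, by omega⟩ : Fin n) then Bc n k s else 0) := by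
      intro i
      have h0iff : (i = (⟨0, by omega⟩ : Fin n)) ↔ ((i : ℕ) = 0) := by
        rw [Fin.ext_iff]
      by_cases hA : (i : ℕ) = 0
      · rw [if_pos hA, if_pos (h0iff.mpr hA)]
      · rw [if_neg hA, if_neg (fun hc => hA (h0iff.mp hc)), if_neg (by omega)]
    rw [Finset.sum_congr rfl (fun i _ => hsplit i), Finset.sum_ite_eq' Finset.univ,
      if_pos (Finset.mem_univ _), if_neg hmk, add_zero]

noncomputable def Qp (s : Multiset ℕ) : Polynomial ℤ :=
  ∑ k ∈ Finset.range n, (-1 : Polynomial ℤ) ^ k * Polynomial.C (Bc n k s) * Polynomial.X ^ (n - 1 - k)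

lemma Qp_empty (hn : 1 ≤ n) : (Polynomial.X - 1) * Qp n 0 = Polynomial.X ^ n - 1 := by
  have h1 : Qp n 0 = ∑ k ∈ Finset.range n, Polynomial.X ^ (n - 1 - k) := by
    rw [Qp]
    apply Finset.sum_congr rfl
    intro k hk
    rw [B_empty n k (Finset.mem_range.mp hk), map_pow, map_neg, Polynomial.C_1]
    have h2 : ((-1 : Polynomial ℤ) ^ k * (-1 : Polynomial ℤ) ^ k) = 1 := by
      rw [← pow_add]
      exact Even.neg_one_pow ⟨k, by ring⟩
    rw [h2, one_mul]
  rw [h1, show (∑ k ∈ Finset.range n, (Polynomial.X : Polynomial ℤ) ^ (n - 1 - k))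
      = ∑ k ∈ Finset.range n, (Polynomial.X : Polynomial ℤ) ^ k from
    Finset.sum_range_reflect (fun k => (Polynomial.X : Polynomial ℤ) ^ k) n,
    mul_comm, geom_sum_mul]

lemma main_induction (s : Multiset ℕ) (hn : 1 ≤ n) (hpos : ∀ x ∈ s, 1 ≤ x) (hsum : s.sum ≤ n) :
    (Polynomial.X - 1) * Qp n s
      = if s = 0 then Polynomial.X ^ n - 1
        else Polynomial.X ^ (n - s.sum) *
          (s.map fun p => (Polynomial.X : Polynomial ℤ) ^ p - 1).prod := by
  induction s using Multiset.induction with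
  | empty => simpa using Qp_empty n hn
  | cons m t ih =>
    have hm : 1 ≤ m := hpos m (Multiset.mem_cons_self m t)
    have hsum' : m + t.sum ≤ n := by rw [Multiset.sum_cons] at hsum; exact hsum
    have htpos : ∀ x ∈ t, 1 ≤ x := fun x hx => hpos x (Multiset.mem_cons_of_mem hx)
    have hQ : Qp n (m ::ₘ t) = Qp n t -
        ∑ j ∈ Finset.range (n - m),
          (-1 : Polynomial ℤ) ^ j * Polynomial.C (Bc n j t) * Polynomial.X ^ (n - 1 - j - m) := by
      rw [Qp, Qp]
      have hsplit : ∀ k ∈ Finset.range n,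
          (-1 : Polynomial ℤ) ^ k * Polynomial.C (Bc n k (m ::ₘ t)) * Polynomial.X ^ (n - 1 - k)
          = (-1 : Polynomial ℤ) ^ k * Polynomial.C (Bc n k t) * Polynomial.X ^ (n - 1 - k)
            + (if m ≤ k then
                -((-1 : Polynomial ℤ) ^ (k - m) * Polynomial.C (Bc n (k - m) t)
                  * Polynomial.X ^ (n - 1 - k)) else 0) := by
        intro k hk
        rw [B_cons n k m (Finset.mem_range.mp hk) hm t]
        by_cases hc : m ≤ k
        · rw [if_pos hc, if_pos hc, map_add, _root_.map_mul]
          have hC : (Polynomial.C ((-1 : ℤ) ^ (m - 1)) : Polynomial ℤ) = (-1) ^ (m - 1) := by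
            rw [map_pow, map_neg, Polynomial.C_1]
          rw [hC]
          have hpow : (-1 : Polynomial ℤ) ^ k * (-1 : Polynomial ℤ) ^ (m - 1)
              = -(-1 : Polynomial ℤ) ^ (k - m) := by
            rw [← pow_add]
            have h2 : k + (m - 1) = (k - m) + (2 * m - 1) := by omega
            rw [h2, pow_add]
            have h3 : (-1 : Polynomial ℤ) ^ (2 * m - 1) = -1 := Odd.neg_one_pow ⟨m - 1, by omega⟩
            rw [h3, mul_neg_one]
          linear_combination (Polynomial.C (Bc n (k - m) t) * Polynomial.X ^ (n - 1 - k)) * hpow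
        · rw [if_neg hc, if_neg hc, add_zero, add_zero]
      rw [Finset.sum_congr rfl hsplit, Finset.sum_add_distrib]
      congr 1
      rw [← Finset.sum_filter]
      have hfe : (Finset.range n).filter (fun k => m ≤ k) = Finset.Ico m n := by
        ext x
        simp [Finset.mem_filter, Finset.mem_range, Finset.mem_Ico]
        omega
      rw [hfe, Finset.sum_Ico_eq_sum_range, ← Finset.sum_neg_distrib]
      apply Finset.sum_congr rfl
      intro j hj
      have hj' : j < n - m := Finset.mem_range.mp hj
      have e1 : m + j - m = j := by omega
      have e2 : n - 1 - (m + j) = n - 1 - j - m := by omega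
      rw [e1, e2]
    have hXmR : Polynomial.X ^ m *
        (∑ j ∈ Finset.range (n - m),
          (-1 : Polynomial ℤ) ^ j * Polynomial.C (Bc n j t) * Polynomial.X ^ (n - 1 - j - m))
        = ∑ j ∈ Finset.range (n - m),
          (-1 : Polynomial ℤ) ^ j * Polynomial.C (Bc n j t) * Polynomial.X ^ (n - 1 - j) := by
      rw [Finset.mul_sum]
      apply Finset.sum_congr rfl
      intro j hj
      have hj' : j < n - m := Finset.mem_range.mp hj
      have he : (n - 1 - j - m) + m = n - 1 - j := by omega
      calc Polynomial.X ^ m *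
            ((-1 : Polynomial ℤ) ^ j * Polynomial.C (Bc n j t) * Polynomial.X ^ (n - 1 - j - m))
          = (-1 : Polynomial ℤ) ^ j * Polynomial.C (Bc n j t) *
              (Polynomial.X ^ (n - 1 - j - m) * Polynomial.X ^ m) := by ring
        _ = _ := by rw [← pow_add, he]
    have hx : (Polynomial.X : Polynomial ℤ) ^ m ≠ 0 := pow_ne_zero _ Polynomial.X_ne_zero
    by_cases ht : t = 0
    · subst ht
      rw [Multiset.sum_zero, add_zero] at hsum'
      have hA : (∑ j ∈ Finset.range (n - m),
            (-1 : Polynomial ℤ) ^ j * Polynomial.C (Bc n j 0) * Polynomial.X ^ (n - 1 - j))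
          = ∑ j ∈ Finset.range (n - m), (Polynomial.X : Polynomial ℤ) ^ (n - 1 - j) := by
        apply Finset.sum_congr rfl
        intro j hj
        have hj' : j < n - m := Finset.mem_range.mp hj
        rw [B_empty n j (by omega), map_pow, map_neg, Polynomial.C_1,
          show ((-1 : Polynomial ℤ) ^ j * (-1 : Polynomial ℤ) ^ j) = 1 from by
            rw [← pow_add]; exact Even.neg_one_pow ⟨j, by ring⟩, one_mul]
      have hB : (∑ j ∈ Finset.range (n - m), (Polynomial.X : Polynomial ℤ) ^ (n - 1 - j))
          = Polynomial.X ^ m * ∑ j ∈ Finset.range (n - m), Polynomial.X ^ j := by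
        rw [Finset.mul_sum]
        rw [show (∑ j ∈ Finset.range (n - m), Polynomial.X ^ m * (Polynomial.X : Polynomial ℤ) ^ j)
            = ∑ j ∈ Finset.range (n - m), (Polynomial.X : Polynomial ℤ) ^ (m + j) from
          Finset.sum_congr rfl (fun j _ => by rw [← pow_add])]
        rw [← Finset.sum_range_reflect (fun j => (Polynomial.X : Polynomial ℤ) ^ (m + j)) (n - m)]
        apply Finset.sum_congr rfl
        intro j hj
        have hj' : j < n - m := Finset.mem_range.mp hj
        congr 1
        omega
      have hRg : (∑ j ∈ Finset.range (n - m),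
            (-1 : Polynomial ℤ) ^ j * Polynomial.C (Bc n j 0) * Polynomial.X ^ (n - 1 - j - m))
          = ∑ j ∈ Finset.range (n - m), (Polynomial.X : Polynomial ℤ) ^ j :=
        mul_left_cancel₀ hx (hXmR.trans (hA.trans hB))
      rw [if_neg (Multiset.cons_ne_zero), hQ, hRg, mul_sub, Qp_empty n hn,
        mul_comm (Polynomial.X - 1) (∑ j ∈ Finset.range (n - m), (Polynomial.X : Polynomial ℤ) ^ j),
        geom_sum_mul, Multiset.sum_cons, Multiset.sum_zero, add_zero, Multiset.map_cons,
        Multiset.map_zero, Multiset.prod_cons, Multiset.prod_zero, mul_one,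
        show (Polynomial.X : Polynomial ℤ) ^ n = Polynomial.X ^ (n - m) * Polynomial.X ^ m from by
          rw [← pow_add]; congr 1; omega]
      ring
    · have htsum : 1 ≤ t.sum := by
        obtain ⟨x, hx⟩ := Multiset.exists_mem_of_ne_zero ht
        have h1 := htpos x hx
        have h2 : x ≤ t.sum := Multiset.single_le_sum (fun y _ => Nat.zero_le y) x hx
        omega
      have hQpt : Polynomial.X ^ m *
          (∑ j ∈ Finset.range (n - m),
            (-1 : Polynomial ℤ) ^ j * Polynomial.C (Bc n j t) * Polynomial.X ^ (n - 1 - j - m))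
          = Qp n t := by
        rw [hXmR, Qp]
        apply Finset.sum_subset (Finset.range_subset_range.mpr (by omega : n - m ≤ n))
        intro j hjn hjnot
        have hj1 : n - m ≤ j := by
          by_contra hcon
          exact hjnot (Finset.mem_range.mpr (by omega))
        rw [B_vanish n j t (Finset.mem_range.mp hjn) htsum (by omega), Polynomial.C_0]
        ring
      have h4 : (Polynomial.X - 1) * Qp n t
          = Polynomial.X ^ (n - t.sum) *
            (t.map fun p => (Polynomial.X : Polynomial ℤ) ^ p - 1).prod := by
        rw [ih htpos (by omega), if_neg ht]
      have hmain : Polynomial.X ^ m * ((Polynomial.X - 1) * Qp n (m ::ₘ t))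
          = Polynomial.X ^ m * (Polynomial.X ^ (n - (m ::ₘ t).sum) *
              ((m ::ₘ t).map fun p => (Polynomial.X : Polynomial ℤ) ^ p - 1).prod) := by
        calc Polynomial.X ^ m * ((Polynomial.X - 1) * Qp n (m ::ₘ t))
            = (Polynomial.X - 1) * (Polynomial.X ^ m * Qp n t - Polynomial.X ^ m *
              (∑ j ∈ Finset.range (n - m),
                (-1 : Polynomial ℤ) ^ j * Polynomial.C (Bc n j t) * Polynomial.X ^ (n - 1 - j - m))) := by
              rw [hQ]; ring
          _ = (Polynomial.X ^ m - 1) * ((Polynomial.X - 1) * Qp n t) := by rw [hQpt]; ring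
          _ = (Polynomial.X ^ m - 1) * (Polynomial.X ^ (n - t.sum) *
              (t.map fun p => (Polynomial.X : Polynomial ℤ) ^ p - 1).prod) := by rw [h4]
          _ = Polynomial.X ^ m * (Polynomial.X ^ (n - (m ::ₘ t).sum) *
              ((m ::ₘ t).map fun p => (Polynomial.X : Polynomial ℤ) ^ p - 1).prod) := by
              rw [Multiset.sum_cons, Multiset.map_cons, Multiset.prod_cons,
                show n - t.sum = m + (n - (m + t.sum)) from by omega, pow_add]
              ring
      rw [mul_left_cancel₀ hx hmain, if_neg (Multiset.cons_ne_zero)]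


lemma getD_replicate_nat (kk jj : ℕ) :
    (List.replicate kk (1 : ℕ)).getD jj 0 = if jj < kk then 1 else 0 := by
  induction kk generalizing jj with
  | zero => simp
  | succ kk ih =>
    cases jj with
    | zero => simp [List.replicate]
    | succ jj =>
      rw [List.replicate_succ, List.getD_cons_succ, ih]
      split_ifs <;> omega

lemma hook_sort (n k : ℕ) (hk : k < n) :
    ((SnChar.hookPart n k).parts.sort (· ≤ ·)) = List.replicate k 1 ++ [n - k] := by
  have hparts : (SnChar.hookPart n k).parts = (n - k) ::ₘ Multiset.replicate k 1 := by
    rw [SnChar.hookPart, dif_pos hk]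
  have hmeq : ((List.replicate k 1 ++ [n - k] : List ℕ) : Multiset ℕ)
      = (n - k) ::ₘ Multiset.replicate k 1 := by
    rw [← Multiset.coe_add, ← Multiset.coe_replicate]
    rw [show (([n - k] : List ℕ) : Multiset ℕ) = {n - k} from rfl]
    rw [add_comm, ← Multiset.singleton_add]
  have hperm : List.Perm ((SnChar.hookPart n k).parts.sort (· ≤ ·)) (List.replicate k 1 ++ [n - k]) := by
    apply Multiset.coe_eq_coe.mp
    rw [Multiset.sort_eq, hmeq, hparts]
  have hs1 : List.Pairwise (· ≤ ·) ((SnChar.hookPart n k).parts.sort (· ≤ ·)) :=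
    Multiset.pairwise_sort _ _
  have hs2 : List.Pairwise (· ≤ ·) (List.replicate k 1 ++ [n - k]) := by
    rw [List.pairwise_append]
    refine ⟨?_, ?_, ?_⟩
    · apply List.pairwise_replicate.mpr
      simp
    · simp
    · intro a ha b hb
      have h1 := List.eq_of_mem_replicate ha
      have h2 : b = n - k := by simpa using hb
      omega
  exact List.Perm.eq_of_pairwise' hs1 hs2 hperm

lemma part_hookPart (n k : ℕ) (hk : k < n) (i : ℕ) :
    SnChar.part (SnChar.hookPart n k) (i + 1)
      = if i = 0 then n - k else if i ≤ k then 1 else 0 := by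
  rw [SnChar.part, hook_sort n k hk, Nat.add_sub_cancel]
  rw [List.reverse_append, List.reverse_replicate]
  cases i with
  | zero => simp
  | succ i =>
    rw [show ([n - k].reverse ++ List.replicate k 1) = (n - k) :: List.replicate k 1 by simp]
    rw [List.getD_cons_succ, getD_replicate_nat]
    have : ¬ (i + 1 = 0) := by omega
    rw [if_neg this]
    by_cases h : i + 1 ≤ k
    · rw [if_pos h, if_pos (by omega)]
    · rw [if_neg h, if_neg (by omega)]

lemma charValue_eq (n k : ℕ) (hk : k < n) (ν : n.Partition) :
    SnChar.charValue (SnChar.hookPart n k) ν = Bc n k ν.parts := by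
  rw [SnChar.charValue, Bc]
  have hfun : (fun i : Fin n => SnChar.part (SnChar.hookPart n k) ((i : ℕ) + 1) + (n - 1 - (i : ℕ)))
      = Ef n ν.parts.sum k := by
    funext i
    rw [part_hookPart n k hk]
    have hsum : ν.parts.sum = n := ν.parts_sum
    rw [hsum]
    simp only [Ef]
    have := i.isLt
    split_ifs <;> omega
  rw [hfun]
  rfl

end SnCharAux

open SnChar Polynomial in
/-- `(X-1)·Σ_{k=0}^{n-1} (-1)^k ξ_{n,k}(ν) X^{n-1-k} = Π_k (X^{ν_k} - 1)`. -/
theorem stmt4 (n : ℕ) (hn : 1 ≤ n) (ν : n.Partition) :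
    (X - 1) * ∑ k ∈ Finset.range n,
        ((-1 : Polynomial ℤ) ^ k * C (charValue (hookPart n k) ν) * X ^ (n - 1 - k)) =
      (ν.parts.map fun p => (X : Polynomial ℤ) ^ p - 1).prod := by
  have hsum : ν.parts.sum = n := ν.parts_sum
  have hne : ν.parts ≠ 0 := by
    intro h
    rw [h, Multiset.sum_zero] at hsum
    omega
  have hpos : ∀ x ∈ ν.parts, 1 ≤ x := fun x hx => ν.parts_pos hx
  have hmain := SnCharAux.main_induction n ν.parts hn hpos (le_of_eq hsum)
  rw [if_neg hne, hsum, Nat.sub_self, pow_zero, one_mul] at hmain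
  rw [← hmain]
  congr 1
  rw [SnCharAux.Qp]
  apply Finset.sum_congr rfl
  intro k hk
  rw [SnCharAux.charValue_eq n k (Finset.mem_range.mp hk) ν]
end

section
/- If λ is a partition of n with Durfee square size k, then the Murnaghan–Nakayama expansion with respect to the cycle type (h_1, h_2, …, h_k) of principal hook lengths gives |χ_λ((h_1,…,h_k))| = 1; moreover, for any m with h_1 < m ≤ n, the value χ_λ on cycle type (m, 1, 1, …, 1) is 0. -/
namespace SnCharP

open MvPolynomial Finset

noncomputable def VP (n : ℕ) (M : Multiset ℕ) : MvPolynomial (Fin n) ℤ :=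
  (∏ p ∈ Finset.univ.filter (fun p : Fin n × Fin n => p.1 < p.2),
      (X p.1 - X p.2)) *
    (M.map fun m => ∑ i : Fin n, (X i : MvPolynomial (Fin n) ℤ) ^ m).prod

noncomputable def cc (n : ℕ) (β : Fin n → ℕ) (M : Multiset ℕ) : ℤ :=
  coeff (Finsupp.equivFunOnFinite.symm β) (VP n M)

variable {n : ℕ}

lemma cc_cons (β : Fin n → ℕ) (m : ℕ) (M : Multiset ℕ) :
    cc n β (m ::ₘ M) =
      ∑ i : Fin n, (if m ≤ β i then cc n (Function.update β i (β i - m)) M else 0) := by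
  have hVP : VP n (m ::ₘ M) = ∑ i : Fin n, X i ^ m * VP n M := by
    unfold VP
    rw [Multiset.map_cons, Multiset.prod_cons, ← mul_assoc, mul_comm _ (∑ i : Fin n, (X i : MvPolynomial (Fin n) ℤ) ^ m), mul_assoc, Finset.sum_mul]
  rw [cc, hVP, coeff_sum]
  refine Finset.sum_congr rfl fun i _ => ?_
  rw [X_pow_eq_monomial, coeff_monomial_mul', one_mul]
  by_cases h : m ≤ β i
  · rw [if_pos (Finsupp.single_le_iff.mpr h), if_pos h]
    show coeff _ _ = cc n _ M
    unfold cc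
    congr 1
    ext x
    rw [Finsupp.tsub_apply]
    rcases eq_or_ne x i with rfl | hx
    · simp [Function.update_self, Finsupp.single_eq_same]
    · simp [Function.update_of_ne hx, Finsupp.single_eq_of_ne' (Ne.symm hx)]
  · rw [if_neg (fun hc => h (Finsupp.single_le_iff.mp hc)), if_neg h]

noncomputable def Vd (n : ℕ) : MvPolynomial (Fin n) ℤ :=
  ∏ p ∈ Finset.univ.filter (fun p : Fin n × Fin n => p.1 < p.2), (X p.1 - X p.2)

def Np (n : ℕ) : ℕ := (Finset.univ.filter (fun p : Fin n × Fin n => p.1 < p.2)).card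

lemma VP_eq (M : Multiset ℕ) :
    VP n M = Vd n * (M.map fun m => ∑ i : Fin n, (X i : MvPolynomial (Fin n) ℤ) ^ m).prod := rfl

lemma Vd_eq_det :
    Vd n = (-1 : MvPolynomial (Fin n) ℤ) ^ Np n *
      (Matrix.vandermonde fun i : Fin n => (X i : MvPolynomial (Fin n) ℤ)).det := by
  rw [Matrix.det_vandermonde]
  have h2 : ∏ i : Fin n, ∏ j ∈ Finset.Ioi i, ((X j : MvPolynomial (Fin n) ℤ) - X i)
      = ∏ p ∈ Finset.univ.filter (fun p : Fin n × Fin n => p.1 < p.2), (X p.2 - X p.1) := by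
    rw [Finset.prod_sigma']
    refine Finset.prod_nbij' (fun p => (p.1, p.2)) (fun p => ⟨p.1, p.2⟩) ?_ ?_ ?_ ?_ ?_ <;>
      simp [Finset.mem_sigma, Finset.mem_Ioi]
  rw [h2, Vd, Np, ← Finset.prod_const (-1 : MvPolynomial (Fin n) ℤ), ← Finset.prod_mul_distrib]
  exact Finset.prod_congr rfl fun p _ => by ring

lemma rename_Vd {i j : Fin n} (hij : i ≠ j) :
    rename (Equiv.swap i j) (Vd n) = - Vd n := by
  have h1 := AlgHom.map_det (rename (R := ℤ) (⇑(Equiv.swap i j)))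
    (Matrix.vandermonde fun k : Fin n => (X k : MvPolynomial (Fin n) ℤ))
  have h2 : ((Matrix.vandermonde fun k : Fin n => (X k : MvPolynomial (Fin n) ℤ)).map
        (rename (⇑(Equiv.swap i j))))
      = (Matrix.vandermonde fun k : Fin n => (X k : MvPolynomial (Fin n) ℤ)).submatrix
          (Equiv.swap i j) id := by
    ext a b
    simp [Matrix.vandermonde, Matrix.map_apply, Matrix.submatrix_apply, map_pow]
  rw [Vd_eq_det, map_mul, map_pow, map_neg, map_one, h1, AlgHom.mapMatrix_apply, h2,
    Matrix.det_permute, Equiv.Perm.sign_swap hij]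
  push_cast
  ring

lemma rename_VP (M : Multiset ℕ) {i j : Fin n} (hij : i ≠ j) :
    rename (Equiv.swap i j) (VP n M) = - VP n M := by
  have hP : rename (⇑(Equiv.swap i j))
        ((M.map fun m => ∑ i : Fin n, (X i : MvPolynomial (Fin n) ℤ) ^ m).prod)
      = (M.map fun m => ∑ i : Fin n, (X i : MvPolynomial (Fin n) ℤ) ^ m).prod := by
    rw [map_multiset_prod, Multiset.map_map]
    congr 1
    apply Multiset.map_congr rfl
    intro m _
    simp only [Function.comp_apply]
    rw [map_sum]
    simp only [map_pow, rename_X]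
    exact Equiv.sum_comp (Equiv.swap i j) (fun k => (X k : MvPolynomial (Fin n) ℤ) ^ m)
  rw [VP_eq, map_mul, rename_Vd hij, hP, neg_mul]

lemma cc_swap (β : Fin n → ℕ) (M : Multiset ℕ) {i j : Fin n} (hij : i ≠ j) :
    cc n (β ∘ (Equiv.swap i j)) M = - cc n β M := by
  have key := coeff_rename_mapDomain (⇑(Equiv.swap i j)) (Equiv.injective _) (VP n M)
      (Finsupp.equivFunOnFinite.symm (β ∘ (Equiv.swap i j)))
  rw [rename_VP M hij] at key
  have hmd : Finsupp.mapDomain (⇑(Equiv.swap i j))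
      (Finsupp.equivFunOnFinite.symm (β ∘ ⇑(Equiv.swap i j))) = Finsupp.equivFunOnFinite.symm β := by
    rw [← Finsupp.equivMapDomain_eq_mapDomain]
    ext x
    rw [Finsupp.equivMapDomain_apply]
    show β (Equiv.swap i j ((Equiv.swap i j).symm x)) = β x
    rw [Equiv.apply_symm_apply]
  rw [hmd, coeff_neg] at key
  unfold cc
  linarith [key]

lemma cc_eq_zero (β : Fin n → ℕ) (M : Multiset ℕ) {i j : Fin n} (hij : i ≠ j)
    (hval : β i = β j) : cc n β M = 0 := by
  have h := cc_swap β M hij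
  have hβ : β ∘ (Equiv.swap i j) = β := by
    funext x
    simp only [Function.comp_apply, Equiv.swap_apply_def]
    split_ifs with h1 h2 <;> simp_all
  rw [hβ] at h
  linarith

lemma cc_comp_perm_abs (M : Multiset ℕ) (σ : Equiv.Perm (Fin n)) :
    ∀ β : Fin n → ℕ, |cc n (β ∘ σ) M| = |cc n β M| := by
  refine Equiv.Perm.swap_induction_on σ (by intro β; rfl) ?_
  intro f x y hxy ih β
  have hcomp : β ∘ ⇑(Equiv.swap x y * f) = (β ∘ ⇑(Equiv.swap x y)) ∘ ⇑f := by
    funext z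
    simp [Function.comp, Equiv.Perm.mul_apply]
  rw [hcomp, ih (β ∘ ⇑(Equiv.swap x y)), cc_swap β M hxy, abs_neg]

lemma cc_abs_of_image_eq (M : Multiset ℕ) {f g : Fin n → ℕ} (hf : Function.Injective f)
    (h : Finset.image f Finset.univ = Finset.image g Finset.univ) :
    |cc n f M| = |cc n g M| := by
  have hex : ∀ i, ∃ j, g j = f i := by
    intro i
    have : f i ∈ Finset.image g Finset.univ := h ▸ Finset.mem_image_of_mem f (Finset.mem_univ i)
    simpa [Finset.mem_image] using this
  choose σ' hσ' using hex
  have hinj : Function.Injective σ' := fun a b hab => hf (by rw [← hσ', ← hσ', hab])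
  have hfg : f = g ∘ (Equiv.ofBijective σ' (Finite.injective_iff_bijective.mp hinj)) :=
    funext fun i => (hσ' i).symm
  rw [hfg]
  exact cc_comp_perm_abs M _ g

lemma cc_nil_abs (β : Fin n → ℕ) (hinj : Function.Injective β)
    (him : Finset.image β Finset.univ = Finset.range n) : |cc n β 0| = 1 := by
  classical
  have hlt : ∀ i, β i < n := fun i => by
    have : β i ∈ Finset.range n := him ▸ Finset.mem_image_of_mem β (Finset.mem_univ i)
    simpa using this
  have hτinj : Function.Injective (fun x : Fin n => (⟨β x, hlt x⟩ : Fin n)) :=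
    fun a b hab => hinj (congrArg Fin.val hab)
  set e : Equiv.Perm (Fin n) := Equiv.ofBijective _ (Finite.injective_iff_bijective.mp hτinj)
    with he_def
  have he : ∀ x, ((e x : Fin n) : ℕ) = β x := fun x => rfl
  have hVP : VP n 0 = Vd n := by unfold VP Vd; simp
  have hprod : ∀ σ : Equiv.Perm (Fin n),
      (∏ k : Fin n, Matrix.vandermonde (fun i : Fin n => (X i : MvPolynomial (Fin n) ℤ)) (σ k) k)
        = monomial (∑ k : Fin n, Finsupp.single (σ k) (k : ℕ)) (1 : ℤ) := by
    intro σ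
    rw [monomial_sum_one]
    refine Finset.prod_congr rfl fun k _ => ?_
    rw [Matrix.vandermonde_apply, X_pow_eq_monomial]
  have hd : ∀ (σ : Equiv.Perm (Fin n)) (x : Fin n),
      (∑ k : Fin n, Finsupp.single (σ k) (k : ℕ)) x = ((σ.symm x : Fin n) : ℕ) := by
    intro σ x
    rw [Finsupp.finset_sum_apply]
    have h1 : ∀ k : Fin n, (Finsupp.single (σ k) (k : ℕ)) x
        = (fun y : Fin n => if y = x then ((σ.symm y : Fin n) : ℕ) else 0) (σ k) := by
      intro k
      simp only [Finsupp.single_apply]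
      by_cases h : σ k = x
      · rw [if_pos h, if_pos h, Equiv.symm_apply_apply]
      · rw [if_neg h, if_neg h]
    rw [Finset.sum_congr rfl fun k _ => h1 k, Equiv.sum_comp σ
      (fun y : Fin n => if y = x then ((σ.symm y : Fin n) : ℕ) else 0),
      Finset.sum_ite_eq' Finset.univ x]
    simp
  have huniq : ∀ σ : Equiv.Perm (Fin n),
      (∑ k : Fin n, Finsupp.single (σ k) (k : ℕ)) = Finsupp.equivFunOnFinite.symm β ↔
        σ = e.symm := by
    intro σ
    constructor
    · intro h
      have hσe : ∀ x, σ.symm x = e x := by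
        intro x
        apply Fin.val_injective
        have hx := DFunLike.congr_fun h x
        rw [hd σ x] at hx
        rw [hx, he x]
        simp
      have : σ.symm = e := Equiv.ext hσe
      rw [← this, Equiv.symm_symm]
    · rintro rfl
      ext x
      rw [hd]
      show ((e.symm.symm x : Fin n) : ℕ) = β x
      rw [Equiv.symm_symm]
      exact he x
  rw [cc, hVP, Vd_eq_det, Matrix.det_apply, Finset.mul_sum, coeff_sum]
  have hC : ((-1 : MvPolynomial (Fin n) ℤ) ^ Np n) = C ((-1 : ℤ) ^ Np n) := by
    simp
  have hco : ∀ σ : Equiv.Perm (Fin n),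
      coeff (Finsupp.equivFunOnFinite.symm β)
        ((-1 : MvPolynomial (Fin n) ℤ) ^ Np n *
          (Equiv.Perm.sign σ •
            ∏ k, Matrix.vandermonde (fun i : Fin n => (X i : MvPolynomial (Fin n) ℤ)) (σ k) k))
      = (if σ = e.symm then ((-1 : ℤ) ^ Np n) * ((Equiv.Perm.sign σ : ℤˣ) : ℤ) else 0) := by
    intro σ
    rw [hprod σ, hC, coeff_C_mul, coeff_smul, coeff_monomial]
    by_cases h : σ = e.symm
    · rw [if_pos ((huniq σ).mpr h), if_pos h]
      simp [Units.smul_def]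
    · rw [if_neg (fun hc => h ((huniq σ).mp hc)), if_neg h]
      simp
  rw [Finset.sum_congr rfl fun σ _ => hco σ, Finset.sum_ite_eq' Finset.univ e.symm]
  simp only [Finset.mem_univ, if_true]
  rw [abs_mul]
  rcases Int.units_eq_one_or (Equiv.Perm.sign e.symm) with h | h <;>
    simp [h]

end SnCharP


namespace SnCharP

open SnChar Finset

section Lists

private lemma key_list {j : ℕ} (hj : 1 ≤ j) :
    ∀ l : List ℕ, l.Pairwise (· ≥ ·) → ∀ t : ℕ,
      (j ≤ l.getD t 0 ↔ t < (l.filter (fun p => decide (j ≤ p))).length) := by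
  intro l
  induction l with
  | nil => intro _ t; simp; omega
  | cons a tl ih =>
    intro hl t
    have hall : ∀ b ∈ tl, b ≤ a := fun b hb => (List.pairwise_cons.mp hl).1 b hb
    have htl := ih (List.pairwise_cons.mp hl).2
    by_cases hja : j ≤ a
    · rw [List.filter_cons_of_pos (by simpa using hja)]
      cases t with
      | zero => simp [hja]
      | succ t =>
        simp only [List.getD_cons_succ, List.length_cons]
        rw [htl t]
        omega
    · have hfil : tl.filter (fun p => decide (j ≤ p)) = [] := by
        rw [List.filter_eq_nil_iff]
        intro b hb
        have := hall b hb
        simpa using by omega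
      rw [List.filter_cons_of_neg (by simpa using hja), hfil]
      simp only [List.length_nil]
      cases t with
      | zero => simp [hja]
      | succ t =>
        simp only [List.getD_cons_succ]
        constructor
        · intro h
          exfalso
          rcases lt_or_ge t tl.length with ht | ht
          · rw [List.getD_eq_getElem _ _ ht] at h
            have hm := List.getElem_mem ht
            have := hall _ hm
            omega
          · rw [List.getD_eq_default _ _ ht] at h
            omega
        · omega

private lemma sum_getD (l : List ℕ) : ∀ N, l.length ≤ N →
    ∑ i ∈ Finset.range N, l.getD i 0 = l.sum := by
  induction l with
  | nil => intro N _; simp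
  | cons a tl ih =>
    intro N hN
    cases N with
    | zero => simp at hN
    | succ N =>
      rw [Finset.sum_range_succ' (fun i => (a :: tl).getD i 0) N]
      simp only [List.getD_cons_succ, List.getD_cons_zero]
      rw [ih N (by simpa using hN)]
      simp [List.sum_cons]
      omega

end Lists

section PartFacts

variable {n : ℕ} (lam : n.Partition)

def Ld (lam : n.Partition) : List ℕ := (lam.parts.sort (· ≤ ·)).reverse

lemma Ld_coe : (Ld lam : Multiset ℕ) = lam.parts := by
  unfold Ld
  rw [Multiset.coe_reverse, Multiset.sort_eq]

lemma Ld_sorted : (Ld lam).Pairwise (· ≥ ·) := by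
  have h := Multiset.pairwise_sort lam.parts (· ≤ ·)
  exact List.pairwise_reverse.mpr h

lemma part_eq_getD (i : ℕ) : part lam i = (Ld lam).getD (i - 1) 0 := rfl

lemma conj_eq_length (j : ℕ) :
    conj lam j = ((Ld lam).filter (fun p => decide (j ≤ p))).length := by
  unfold conj
  rw [← Ld_coe lam]
  rw [Multiset.filter_coe, Multiset.coe_card]

lemma part_le_iff {i j : ℕ} (hi : 1 ≤ i) (hj : 1 ≤ j) :
    j ≤ part lam i ↔ i ≤ conj lam j := by
  rw [part_eq_getD, conj_eq_length, key_list hj _ (Ld_sorted lam) (i - 1)]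
  omega

lemma part_anti {i i' : ℕ} (hi : 1 ≤ i) (h : i ≤ i') : part lam i' ≤ part lam i := by
  rcases Nat.eq_zero_or_pos (part lam i') with h0 | h0
  · omega
  · have h1 : i' ≤ conj lam (part lam i') := (part_le_iff lam (hi.trans h) h0).mp le_rfl
    exact (part_le_iff lam hi h0).mpr (h.trans h1)

lemma conj_anti {j j' : ℕ} (h : j ≤ j') : conj lam j' ≤ conj lam j := by
  apply Multiset.card_le_card
  apply Multiset.monotone_filter_right
  intro a ha
  omega

lemma card_parts_le : Multiset.card lam.parts ≤ n := by
  have h := Multiset.card_nsmul_le_sum (s := lam.parts) (a := 1) (fun x hx => lam.parts_pos hx)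
  simpa [lam.parts_sum] using h

lemma conj_le (j : ℕ) : conj lam j ≤ n := by
  refine le_trans (Multiset.card_le_card (Multiset.filter_le _ _)) (card_parts_le lam)

lemma part_le (i : ℕ) : part lam i ≤ n := by
  rw [part_eq_getD]
  rcases lt_or_ge (i - 1) (Ld lam).length with h | h
  · rw [List.getD_eq_getElem _ _ h]
    have hm : (Ld lam)[i-1] ∈ (Ld lam : Multiset ℕ) := by
      exact List.getElem_mem h
    rw [Ld_coe lam] at hm
    have := Multiset.single_le_sum (fun x _ => Nat.zero_le x) _ hm
    rwa [lam.parts_sum] at this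
  · rw [List.getD_eq_default _ _ h]
    omega

lemma part_one_pos (hn : 1 ≤ n) : 1 ≤ part lam 1 := by
  rw [part_eq_getD]
  have hlen : 0 < (Ld lam).length := by
    rw [← Multiset.coe_card, Ld_coe lam]
    by_contra h
    push_neg at h
    have hc : Multiset.card lam.parts = 0 := by omega
    have h0 : lam.parts = 0 := Multiset.card_eq_zero.mp hc
    have hs := lam.parts_sum
    rw [h0] at hs
    simp at hs
    omega
  have hlt : (1:ℕ) - 1 < (Ld lam).length := by omega
  rw [List.getD_eq_getElem _ _ hlt]
  have hm : (Ld lam)[(1:ℕ)-1] ∈ (Ld lam : Multiset ℕ) := List.getElem_mem hlt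
  rw [Ld_coe lam] at hm
  exact lam.parts_pos hm

lemma conj_eq_zero {j : ℕ} (hj : part lam 1 < j) : conj lam j = 0 := by
  by_contra h
  have h1 : 1 ≤ conj lam j := by omega
  have hj1 : 1 ≤ j := by
    rcases Nat.eq_zero_or_pos j with rfl | h2
    · unfold conj at h1
      have : Multiset.card lam.parts ≤ n := card_parts_le lam
      omega
    · exact h2
  have := (part_le_iff lam le_rfl hj1).mpr h1
  omega

lemma sum_part : ∑ i ∈ Finset.range n, part lam (i + 1) = n := by
  have h1 : ∀ i : ℕ, part lam (i + 1) = (Ld lam).getD i 0 := fun i => rfl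
  simp only [h1]
  rw [sum_getD _ n (by rw [← Multiset.coe_card, Ld_coe lam]; exact card_parts_le lam)]
  have := congrArg Multiset.sum (Ld_coe lam)
  rw [Multiset.sum_coe] at this
  rw [this, lam.parts_sum]

end PartFacts

section Durfee

variable {n : ℕ} (lam : n.Partition)

lemma durfee_le : durfee lam ≤ n := by
  apply Finset.sup_le
  intro i hi
  simp only [Finset.mem_filter, Finset.mem_Icc] at hi
  exact hi.1.2

lemma durfee_pos (hn : 1 ≤ n) : 1 ≤ durfee lam := by
  have h1 : (1 : ℕ) ∈ (Finset.Icc 1 n).filter (fun i => i ≤ part lam i) := by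
    simp only [Finset.mem_filter, Finset.mem_Icc]
    exact ⟨⟨le_rfl, hn⟩, part_one_pos lam hn⟩
  exact Finset.le_sup (f := id) h1

lemma durfee_spec (hn : 1 ≤ n) : durfee lam ≤ part lam (durfee lam) := by
  have hne : ((Finset.Icc 1 n).filter (fun i => i ≤ part lam i)).Nonempty := by
    refine ⟨1, ?_⟩
    simp only [Finset.mem_filter, Finset.mem_Icc]
    exact ⟨⟨le_rfl, hn⟩, part_one_pos lam hn⟩
  obtain ⟨b, hb, heq⟩ := Finset.exists_mem_eq_sup _ hne (id : ℕ → ℕ)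
  simp only [Finset.mem_filter, Finset.mem_Icc] at hb
  have : durfee lam = b := heq
  rw [this]
  exact hb.2

lemma part_ge_of_le_durfee (hn : 1 ≤ n) {i : ℕ} (h1 : 1 ≤ i) (h2 : i ≤ durfee lam) :
    i ≤ part lam i := by
  calc i ≤ durfee lam := h2
  _ ≤ part lam (durfee lam) := durfee_spec lam hn
  _ ≤ part lam i := part_anti lam h1 h2

lemma conj_ge_of_le_durfee (hn : 1 ≤ n) {i : ℕ} (h1 : 1 ≤ i) (h2 : i ≤ durfee lam) :
    i ≤ conj lam i :=
  (part_le_iff lam h1 h1).mp (part_ge_of_le_durfee lam hn h1 h2)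

lemma part_lt_of_gt_durfee {i : ℕ} (h : durfee lam < i) : part lam i < i := by
  by_contra hcon
  push_neg at hcon
  have h1 : 1 ≤ i := by omega
  rcases le_or_gt i n with h2 | h2
  · have : i ≤ durfee lam := by
      apply Finset.le_sup (f := id)
      simp only [Finset.mem_filter, Finset.mem_Icc]
      exact ⟨⟨h1, h2⟩, hcon⟩
    omega
  · have := part_le lam i
    omega

lemma conj_lt_of_gt_durfee {i : ℕ} (hi : 1 ≤ i) (h : durfee lam < i) : conj lam i < i := by
  by_contra hcon
  push_neg at hcon
  have := (part_le_iff lam hi hi).mpr hcon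
  have := part_lt_of_gt_durfee lam h
  omega

end Durfee

end SnCharP


namespace SnCharP

open SnChar Finset

section BC

variable {n : ℕ} (lam : n.Partition)

def bb {n : ℕ} (lam : n.Partition) (i : ℕ) : ℕ := part lam (i + 1) + (n - 1 - i)

def cf {n : ℕ} (lam : n.Partition) (j : ℕ) : ℕ := n + j - conj lam (j + 1)

lemma bb_lt_bb {i i' : ℕ} (h : i < i') (h2 : i' < n) : bb lam i' < bb lam i := by
  have h1 : part lam (i' + 1) ≤ part lam (i + 1) := part_anti lam (by omega) (by omega)
  unfold bb
  omega

lemma bb_anti {i i' : ℕ} (h : i ≤ i') (h2 : i' < n) : bb lam i' ≤ bb lam i := by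
  have h1 : part lam (i' + 1) ≤ part lam (i + 1) := part_anti lam (by omega) (by omega)
  unfold bb
  omega

lemma cf_lt_cf {j j' : ℕ} (h : j < j') : cf lam j < cf lam j' := by
  have h1 : conj lam (j' + 1) ≤ conj lam (j + 1) := conj_anti lam (by omega)
  have h2 : conj lam (j + 1) ≤ n := conj_le lam _
  unfold cf
  omega

lemma bb_ne_cf {i j : ℕ} (hi : i < n) : bb lam i ≠ cf lam j := by
  intro heq
  have hG := part_le_iff lam (i := i + 1) (j := j + 1) (by omega) (by omega)
  have h2 : conj lam (j + 1) ≤ n := conj_le lam _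
  unfold bb cf at heq
  rcases le_or_gt (j + 1) (part lam (i + 1)) with h | h
  · have := hG.mp h
    omega
  · have : ¬ (i + 1 ≤ conj lam (j + 1)) := fun hc => by have := hG.mpr hc; omega
    omega

lemma totality (hn : 1 ≤ n) (x : ℕ) :
    (∃ i, i < n ∧ bb lam i = x) ∨ (∃ j, cf lam j = x) := by
  rcases le_or_gt (n + part lam 1) x with hx | hx
  · right
    refine ⟨x - n, ?_⟩
    have h0 : conj lam (x - n + 1) = 0 := conj_eq_zero lam (by omega)
    unfold cf
    omega
  · set N := n + part lam 1 with hN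
    set Bf := (Finset.range n).image (bb lam) with hBf
    set Cf := (Finset.range (part lam 1)).image (cf lam) with hCf
    have hBsub : Bf ⊆ Finset.range N := by
      intro y hy
      simp only [hBf, Finset.mem_image, Finset.mem_range] at hy ⊢
      obtain ⟨i, hi, rfl⟩ := hy
      have := part_anti lam (i := 1) (i' := i + 1) le_rfl (by omega)
      unfold bb
      omega
    have hCsub : Cf ⊆ Finset.range N := by
      intro y hy
      simp only [hCf, Finset.mem_image, Finset.mem_range] at hy ⊢
      obtain ⟨j, hj, rfl⟩ := hy
      have h2 : conj lam (j + 1) ≤ n := conj_le lam _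
      unfold cf
      omega
    have hdisj : Disjoint Bf Cf := by
      rw [Finset.disjoint_left]
      intro y hy1 hy2
      simp only [hBf, hCf, Finset.mem_image, Finset.mem_range] at hy1 hy2
      obtain ⟨i, hi, rfl⟩ := hy1
      obtain ⟨j, hj, hji⟩ := hy2
      exact bb_ne_cf lam hi hji.symm
    have hBcard : Bf.card = n := by
      rw [hBf, Finset.card_image_of_injOn, Finset.card_range]
      intro a ha b hb hab
      simp only [Finset.coe_range, Set.mem_Iio] at ha hb
      by_contra hne
      rcases lt_or_gt_of_ne hne with h | h
      · have := bb_lt_bb lam h hb; omega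
      · have := bb_lt_bb lam h ha; omega
    have hCcard : Cf.card = part lam 1 := by
      rw [hCf, Finset.card_image_of_injOn, Finset.card_range]
      intro a _ b _ hab
      by_contra hne
      rcases lt_or_gt_of_ne hne with h | h
      · have := cf_lt_cf lam h; omega
      · have := cf_lt_cf lam h; omega
    have hunion : Bf ∪ Cf = Finset.range N := by
      apply Finset.eq_of_subset_of_card_le (Finset.union_subset hBsub hCsub)
      rw [Finset.card_union_of_disjoint hdisj, hBcard, hCcard, Finset.card_range]
    have hxmem : x ∈ Bf ∪ Cf := by
      rw [hunion]
      simpa using hx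
    rcases Finset.mem_union.mp hxmem with h | h
    · left
      simp only [hBf, Finset.mem_image, Finset.mem_range] at h
      obtain ⟨i, hi, rfl⟩ := h
      exact ⟨i, hi, rfl⟩
    · right
      simp only [hCf, Finset.mem_image, Finset.mem_range] at h
      obtain ⟨j, _, rfl⟩ := h
      exact ⟨j, rfl⟩

lemma cf_lt_bb (hn : 1 ≤ n) {t : ℕ} (ht : t < durfee lam) :
    cf lam t < bb lam t ∧ bb lam t - cf lam t = hookLen lam (t + 1) (t + 1) := by
  have hk := durfee_le lam
  have hp := part_ge_of_le_durfee lam hn (i := t + 1) (by omega) (by omega)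
  have hq := conj_ge_of_le_durfee lam hn (i := t + 1) (by omega) (by omega)
  have hqn := conj_le lam (t + 1)
  unfold bb cf hookLen
  omega

lemma bb_lt_n {i : ℕ} (h1 : durfee lam ≤ i) (h2 : i < n) : bb lam i < n := by
  have := part_lt_of_gt_durfee lam (i := i + 1) (by omega)
  unfold bb
  omega

lemma cf_lt_n (hn : 1 ≤ n) {j : ℕ} (h : j < durfee lam) : cf lam j < n := by
  have h1 := conj_ge_of_le_durfee lam hn (i := j + 1) (by omega) (by omega)
  have h2 : conj lam (j + 1) ≤ n := conj_le lam _
  unfold cf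
  omega

lemma bb_gt_cf_next (hn : 1 ≤ n) {i t : ℕ} (hi : i < t) (ht : t < durfee lam) :
    cf lam t < bb lam i := by
  have hkn := durfee_le lam
  have h1 : t - 1 < n := by omega
  have hb := bb_anti lam (i := i) (i' := t - 1) (by omega) h1
  have hp : t ≤ part lam t := part_ge_of_le_durfee lam hn (by omega) (by omega)
  have hq : t + 1 ≤ conj lam (t + 1) := conj_ge_of_le_durfee lam hn (by omega) (by omega)
  have hqn := conj_le lam (t + 1)
  have ht1 : t - 1 + 1 = t := by omega
  unfold bb at hb
  rw [ht1] at hb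
  unfold bb cf
  omega

def Bt {n : ℕ} (lam : n.Partition) (t : ℕ) : Finset ℕ :=
  ((Finset.range t).image (cf lam)) ∪ ((Finset.Ico t n).image (bb lam))

lemma mem_Bt {t x : ℕ} : x ∈ Bt lam t ↔
    (∃ j, j < t ∧ cf lam j = x) ∨ (∃ i, t ≤ i ∧ i < n ∧ bb lam i = x) := by
  simp only [Bt, Finset.mem_union, Finset.mem_image, Finset.mem_range, Finset.mem_Ico]
  constructor
  · rintro (⟨j, hj, rfl⟩ | ⟨i, ⟨hi1, hi2⟩, rfl⟩)
    · exact Or.inl ⟨j, hj, rfl⟩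
    · exact Or.inr ⟨i, hi1, hi2, rfl⟩
  · rintro (⟨j, hj, rfl⟩ | ⟨i, hi1, hi2, rfl⟩)
    · exact Or.inl ⟨j, hj, rfl⟩
    · exact Or.inr ⟨i, ⟨hi1, hi2⟩, rfl⟩

lemma Bt_durfee (hn : 1 ≤ n) : Bt lam (durfee lam) = Finset.range n := by
  have hkn := durfee_le lam
  apply Finset.eq_of_subset_of_card_le
  · intro x hx
    rcases (mem_Bt lam).mp hx with ⟨j, hj, rfl⟩ | ⟨i, hi1, hi2, rfl⟩
    · simpa using cf_lt_n lam hn hj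
    · simpa using bb_lt_n lam hi1 hi2
  · rw [Finset.card_range]
    unfold Bt
    rw [Finset.card_union_of_disjoint]
    · have hc1 : ((Finset.range (durfee lam)).image (cf lam)).card = durfee lam := by
        rw [Finset.card_image_of_injOn, Finset.card_range]
        intro a _ b _ hab
        by_contra hne
        rcases lt_or_gt_of_ne hne with h | h
        · have := cf_lt_cf lam h; omega
        · have := cf_lt_cf lam h; omega
      have hc2 : ((Finset.Ico (durfee lam) n).image (bb lam)).card = n - durfee lam := by
        rw [Finset.card_image_of_injOn, Nat.card_Ico]
        intro a ha b hb hab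
        simp only [Finset.coe_Ico, Set.mem_Ico] at ha hb
        by_contra hne
        rcases lt_or_gt_of_ne hne with h | h
        · have := bb_lt_bb lam h hb.2; omega
        · have := bb_lt_bb lam h ha.2; omega
      omega
    · rw [Finset.disjoint_left]
      intro y hy1 hy2
      simp only [Finset.mem_image, Finset.mem_range, Finset.mem_Ico] at hy1 hy2
      obtain ⟨j, hj, rfl⟩ := hy1
      obtain ⟨i, ⟨hi1, hi2⟩, hji⟩ := hy2
      exact bb_ne_cf lam hi2 hji

lemma bb_mem_Bt {t : ℕ} (ht : t < durfee lam) : bb lam t ∈ Bt lam t := by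
  have := durfee_le lam
  exact (mem_Bt lam).mpr (Or.inr ⟨t, le_rfl, by omega, rfl⟩)

lemma cf_not_mem_Bt {t : ℕ} : cf lam t ∉ Bt lam t := by
  intro h
  rcases (mem_Bt lam).mp h with ⟨j, hj, hjx⟩ | ⟨i, _, hi2, hix⟩
  · have := cf_lt_cf lam hj
    omega
  · exact bb_ne_cf lam hi2 hix

lemma Bt_succ {t : ℕ} (ht : t < durfee lam) :
    Bt lam (t + 1) = insert (cf lam t) ((Bt lam t).erase (bb lam t)) := by
  have hkn := durfee_le lam
  ext x
  rw [Finset.mem_insert, Finset.mem_erase, mem_Bt lam, mem_Bt lam]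
  constructor
  · rintro (⟨j, hj, rfl⟩ | ⟨i, hi1, hi2, rfl⟩)
    · rcases Nat.lt_succ_iff_lt_or_eq.mp hj with hj' | rfl
      · refine Or.inr ⟨fun hc => bb_ne_cf lam (by omega) hc.symm, Or.inl ⟨j, hj', rfl⟩⟩
      · exact Or.inl rfl
    · refine Or.inr ⟨?_, Or.inr ⟨i, by omega, hi2, rfl⟩⟩
      intro hc
      have := bb_lt_bb lam (i := t) (i' := i) (by omega) hi2
      omega
  · rintro (rfl | ⟨hne, ⟨j, hj, rfl⟩ | ⟨i, hi1, hi2, rfl⟩⟩)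
    · exact Or.inl ⟨t, by omega, rfl⟩
    · exact Or.inl ⟨j, by omega, rfl⟩
    · have hit : i ≠ t := fun hc => hne (by rw [hc])
      exact Or.inr ⟨i, by omega, hi2, rfl⟩

lemma lt_bb_of_mem (hn : 1 ≤ n) {t x : ℕ} (ht : t < durfee lam) (hx : x ∈ Bt lam t)
    (hne : x ≠ bb lam t) : x < bb lam t := by
  rcases (mem_Bt lam).mp hx with ⟨j, hj, rfl⟩ | ⟨i, hi1, hi2, rfl⟩
  · have h1 := cf_lt_cf lam hj
    have h2 := (cf_lt_bb lam hn ht).1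
    omega
  · have : t < i := by
      rcases Nat.eq_or_lt_of_le hi1 with rfl | h
      · exact absurd rfl hne
      · exact h
    exact bb_lt_bb lam this hi2

lemma mem_of_lt_cf (hn : 1 ≤ n) {t x : ℕ} (ht : t < durfee lam) (hx : x < cf lam t) :
    x ∈ Bt lam t := by
  rcases totality lam hn x with ⟨i, hi, rfl⟩ | ⟨j, rfl⟩
  · rcases lt_or_ge i t with h | h
    · have := bb_gt_cf_next lam hn h ht
      omega
    · exact (mem_Bt lam).mpr (Or.inr ⟨i, h, hi, rfl⟩)
  · have hjt : j < t := by
      rcases lt_or_ge j t with h | h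
      · exact h
      · rcases Nat.eq_or_lt_of_le h with rfl | h2
        · omega
        · have := cf_lt_cf lam h2
          omega
    exact (mem_Bt lam).mpr (Or.inl ⟨j, hjt, rfl⟩)

lemma Bt_zero : Bt lam 0 = (Finset.range n).image (bb lam) := by
  unfold Bt
  simp [Nat.Ico_zero_eq_range]

lemma Bt_zero_sum : ∑ x ∈ Bt lam 0, x = n + ∑ x ∈ Finset.range n, x := by
  rw [Bt_zero]
  rw [Finset.sum_image]
  · have h1 : ∀ i ∈ Finset.range n, bb lam i = part lam (i + 1) + (n - 1 - i) := fun i _ => rfl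
    rw [Finset.sum_congr rfl h1, Finset.sum_add_distrib, sum_part lam]
    congr 1
    have h2 := Finset.sum_range_reflect (fun i => i) n
    exact h2
  · intro a ha b hb hab
    simp only [Finset.coe_range, Set.mem_Iio] at ha hb
    by_contra hne
    rcases lt_or_gt_of_ne hne with h | h
    · have := bb_lt_bb lam h hb; omega
    · have := bb_lt_bb lam h ha; omega

lemma Bt_sum (hn : 1 ≤ n) : ∀ d t, t + d = durfee lam →
    ∑ x ∈ Bt lam t, x =
      ((Finset.Icc (t + 1) (durfee lam)).val.map (fun I => hookLen lam I I)).sum +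
        ∑ x ∈ Finset.range n, x := by
  intro d
  induction d with
  | zero =>
    intro t ht
    have htk : t = durfee lam := by omega
    subst htk
    rw [Finset.Icc_eq_empty (by omega), Bt_durfee lam hn]
    simp
  | succ d ih =>
    intro t ht
    have ht' : t < durfee lam := by omega
    have hIcc : Finset.Icc (t + 1) (durfee lam) =
        (Finset.Ioc (t + 1) (durfee lam)).cons (t + 1) Finset.left_notMem_Ioc :=
      Finset.Icc_eq_cons_Ioc (by omega)
    have hstep := Bt_succ lam ht'
    have hmem := bb_mem_Bt lam ht'
    have h1 : bb lam t + ∑ x ∈ (Bt lam t).erase (bb lam t), x = ∑ x ∈ Bt lam t, x :=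
      Finset.add_sum_erase _ (fun x => x) hmem
    have h2 : ∑ x ∈ Bt lam (t + 1), x =
        cf lam t + ∑ x ∈ (Bt lam t).erase (bb lam t), x := by
      rw [hstep]
      exact Finset.sum_insert (fun hc => cf_not_mem_Bt lam (Finset.mem_of_mem_erase hc))
    have ih' := ih (t + 1) (by omega)
    rw [Finset.Icc_add_one_left_eq_Ioc] at ih'
    have hh := cf_lt_bb lam hn ht'
    rw [hIcc, Finset.cons_val, Multiset.map_cons, Multiset.sum_cons]
    omega

lemma hook_sum (hn : 1 ≤ n) :
    ((Finset.Icc 1 (durfee lam)).val.map (fun I => hookLen lam I I)).sum = n := by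
  have h := Bt_sum lam hn (durfee lam) 0 (by omega)
  rw [Bt_zero_sum lam] at h
  rw [show (0 : ℕ) + 1 = 1 from rfl] at h
  omega

end BC

end SnCharP


namespace SnCharP

open SnChar MvPolynomial Finset

section Main

variable {n : ℕ}

lemma update_inj {β : Fin n → ℕ} (hinj : Function.Injective β) {i₀ : Fin n} {a : ℕ}
    (ha : a ∉ Finset.image β Finset.univ) : Function.Injective (Function.update β i₀ a) := by
  intro x y hxy
  by_cases hx : x = i₀ <;> by_cases hy : y = i₀
  · rw [hx, hy]
  · subst hx
    rw [Function.update_self, Function.update_of_ne hy] at hxy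
    exact absurd (hxy ▸ Finset.mem_image_of_mem β (Finset.mem_univ y)) ha
  · subst hy
    rw [Function.update_of_ne hx, Function.update_self] at hxy
    exact absurd (hxy.symm ▸ Finset.mem_image_of_mem β (Finset.mem_univ x)) ha
  · rw [Function.update_of_ne hx, Function.update_of_ne hy] at hxy
    exact hinj hxy

lemma image_update {β : Fin n → ℕ} (hinj : Function.Injective β) (i₀ : Fin n) (a : ℕ) :
    Finset.image (Function.update β i₀ a) Finset.univ
      = insert a ((Finset.image β Finset.univ).erase (β i₀)) := by
  ext x
  simp only [Finset.mem_image, Finset.mem_insert, Finset.mem_erase, Finset.mem_univ, true_and]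
  constructor
  · rintro ⟨j, rfl⟩
    rcases eq_or_ne j i₀ with rfl | hj
    · left
      rw [Function.update_self]
    · right
      rw [Function.update_of_ne hj]
      exact ⟨fun h => hj (hinj h), ⟨j, rfl⟩⟩
  · rintro (rfl | ⟨hne, j, rfl⟩)
    · exact ⟨i₀, Function.update_self _ _ _⟩
    · have hj : j ≠ i₀ := fun h => hne (by rw [h])
      exact ⟨j, Function.update_of_ne hj _ _⟩

lemma mainM (hn : 1 ≤ n) (lam : n.Partition) : ∀ d t, t + d = durfee lam →
    ∀ β : Fin n → ℕ, Function.Injective β → Finset.image β Finset.univ = Bt lam t →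
    |cc n β ((Finset.Icc (t + 1) (durfee lam)).val.map (fun I => hookLen lam I I))| = 1 := by
  intro d
  induction d with
  | zero =>
    intro t ht β hinj him
    have htk : t = durfee lam := by omega
    subst htk
    rw [Finset.Icc_eq_empty (by omega)]
    have hmap : ((∅ : Finset ℕ).val.map (fun I => hookLen lam I I)) = 0 := rfl
    rw [hmap]
    exact cc_nil_abs β hinj (by rw [him, Bt_durfee lam hn])
  | succ d ih =>
    intro t ht β hinj him
    have ht' : t < durfee lam := by omega
    have htn : t < n := lt_of_lt_of_le ht' (durfee_le lam)
    obtain ⟨hcb, hbc⟩ := cf_lt_bb lam hn ht'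
    have hIcc : Finset.Icc (t + 1) (durfee lam) =
        (Finset.Ioc (t + 1) (durfee lam)).cons (t + 1) Finset.left_notMem_Ioc :=
      Finset.Icc_eq_cons_Ioc (by omega)
    rw [hIcc, Finset.cons_val, Multiset.map_cons, cc_cons]
    have hbbmem : bb lam t ∈ Finset.image β Finset.univ := by
      rw [him]
      exact bb_mem_Bt lam ht'
    obtain ⟨i₀, -, hi₀⟩ := Finset.mem_image.mp hbbmem
    set M' := (Finset.Ioc (t + 1) (durfee lam)).val.map (fun I => hookLen lam I I) with hM'
    have hzero : ∀ i ∈ Finset.univ, i ≠ i₀ →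
        (if hookLen lam (t + 1) (t + 1) ≤ β i then
          cc n (Function.update β i (β i - hookLen lam (t + 1) (t + 1))) M' else 0) = 0 := by
      intro i _ hne
      by_cases hm : hookLen lam (t + 1) (t + 1) ≤ β i
      · rw [if_pos hm]
        have hmemi : β i ∈ Bt lam t := by
          rw [← him]
          exact Finset.mem_image_of_mem β (Finset.mem_univ i)
        have hne2 : β i ≠ bb lam t := fun hc => hne (hinj (hc.trans hi₀.symm))
        have hlt : β i < bb lam t := lt_bb_of_mem lam hn ht' hmemi hne2
        have hxlt : β i - hookLen lam (t + 1) (t + 1) < cf lam t := by omega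
        have hxmem : β i - hookLen lam (t + 1) (t + 1) ∈ Finset.image β Finset.univ := by
          rw [him]
          exact mem_of_lt_cf lam hn ht' hxlt
        obtain ⟨j₁, -, hj₁⟩ := Finset.mem_image.mp hxmem
        have hj₁i : j₁ ≠ i := by
          intro hc
          rw [hc] at hj₁
          omega
        refine cc_eq_zero _ _ (Ne.symm hj₁i) ?_
        rw [Function.update_self, Function.update_of_ne hj₁i]
        exact hj₁.symm
      · rw [if_neg hm]
    rw [Finset.sum_eq_single_of_mem i₀ (Finset.mem_univ i₀) hzero]
    have hle : hookLen lam (t + 1) (t + 1) ≤ β i₀ := by rw [hi₀]; omega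
    rw [if_pos hle]
    have hupd : β i₀ - hookLen lam (t + 1) (t + 1) = cf lam t := by rw [hi₀]; omega
    have hcfnot : cf lam t ∉ Finset.image β Finset.univ := by
      rw [him]
      exact cf_not_mem_Bt lam
    have hinj' : Function.Injective (Function.update β i₀ (β i₀ - hookLen lam (t + 1) (t + 1))) := by
      rw [hupd]
      exact update_inj hinj hcfnot
    have him' : Finset.image (Function.update β i₀ (β i₀ - hookLen lam (t + 1) (t + 1)))
        Finset.univ = Bt lam (t + 1) := by
      rw [hupd, image_update hinj i₀ (cf lam t), him, hi₀, Bt_succ lam ht']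
    have := ih (t + 1) (by omega) _ hinj' him'
    rw [Finset.Icc_add_one_left_eq_Ioc] at this
    exact this

end Main

end SnCharP

open SnChar in
/-- `|χ_λ| = 1` on the cycle type given by the principal hook lengths of `λ`,
and `χ_λ` vanishes on cycle type `(m,1,…,1)` whenever `h_1(λ) < m ≤ n`. -/
theorem stmt18 (n : ℕ) (hn : 1 ≤ n) (lam : n.Partition) :
    (∃ ν : n.Partition,
        ν.parts = (Finset.Icc 1 (durfee lam)).val.map (fun i => hookLen lam i i) ∧
          |charValue lam ν| = 1) ∧
      ∀ (m : ℕ) (hm1 : hookLen lam 1 1 < m) (hm2 : m ≤ n),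
        charValue lam ⟨m ::ₘ Multiset.replicate (n - m) 1, by
          intro x hx
          rcases Multiset.mem_cons.mp hx with h1 | h1
          · omega
          · have := Multiset.eq_of_mem_replicate h1; omega, by
          have h2' : m ≤ n := hm2
          simp [Multiset.sum_cons, Multiset.sum_replicate]
          omega⟩ = 0 := by
  classical
  have hk1 : 1 ≤ durfee lam := SnCharP.durfee_pos lam hn
  have hβinj : Function.Injective (fun i : Fin n => SnCharP.bb lam (i : ℕ)) := by
    intro a b hab
    have hab' : SnCharP.bb lam (a : ℕ) = SnCharP.bb lam (b : ℕ) := hab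
    by_contra hne
    have hne' : (a : ℕ) ≠ (b : ℕ) := fun h => hne (Fin.val_injective h)
    rcases lt_or_gt_of_ne hne' with h | h
    · have := SnCharP.bb_lt_bb lam h b.isLt
      omega
    · have := SnCharP.bb_lt_bb lam h a.isLt
      omega
  have hβim : Finset.image (fun i : Fin n => SnCharP.bb lam (i : ℕ)) Finset.univ
      = SnCharP.Bt lam 0 := by
    rw [SnCharP.Bt_zero]
    ext x
    simp only [Finset.mem_image, Finset.mem_univ, true_and, Finset.mem_range]
    constructor
    · rintro ⟨i, rfl⟩
      exact ⟨(i : ℕ), i.isLt, rfl⟩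
    · rintro ⟨i, hi, rfl⟩
      exact ⟨⟨i, hi⟩, rfl⟩
  constructor
  · refine ⟨⟨(Finset.Icc 1 (durfee lam)).val.map (fun i => hookLen lam i i), ?_, ?_⟩, rfl, ?_⟩
    · intro x hx
      obtain ⟨I, -, rfl⟩ := Multiset.mem_map.mp hx
      show 0 < (part lam I - I) + (conj lam I - I) + 1
      omega
    · exact SnCharP.hook_sum lam hn
    · have h := SnCharP.mainM hn lam (durfee lam) 0 (by omega) _ hβinj hβim
      rw [show (0 : ℕ) + 1 = 1 from rfl] at h
      exact h
  · intro m hm1 hm2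
    have hcb := SnCharP.cf_lt_bb lam hn (t := 0) (by omega)
    rw [show (0 : ℕ) + 1 = 1 from rfl] at hcb
    show SnCharP.cc n (fun i : Fin n => SnCharP.bb lam (i : ℕ))
      (m ::ₘ Multiset.replicate (n - m) 1) = 0
    rw [SnCharP.cc_cons]
    apply Finset.sum_eq_zero
    intro i _
    split_ifs with hmle
    · have hmle' : m ≤ SnCharP.bb lam (i : ℕ) := hmle
      have hble : SnCharP.bb lam (i : ℕ) ≤ SnCharP.bb lam 0 :=
        SnCharP.bb_anti lam (Nat.zero_le _) i.isLt
      have hxlt : SnCharP.bb lam (i : ℕ) - m < SnCharP.cf lam 0 := by omega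
      have hxmem : SnCharP.bb lam (i : ℕ) - m ∈
          Finset.image (fun i : Fin n => SnCharP.bb lam (i : ℕ)) Finset.univ := by
        rw [hβim]
        exact SnCharP.mem_of_lt_cf lam hn (by omega) hxlt
      obtain ⟨j₁, -, hj₁⟩ := Finset.mem_image.mp hxmem
      have hj₁' : SnCharP.bb lam (j₁ : ℕ) = SnCharP.bb lam (i : ℕ) - m := hj₁
      have hhl : 1 ≤ hookLen lam 1 1 := by
        show 1 ≤ (part lam 1 - 1) + (conj lam 1 - 1) + 1
        omega
      have hj₁i : j₁ ≠ i := by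
        intro hc
        rw [hc] at hj₁'
        omega
      refine SnCharP.cc_eq_zero _ _ (Ne.symm hj₁i) ?_
      rw [Function.update_self, Function.update_of_ne hj₁i]
      exact hj₁.symm
    · rfl
end
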